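/- For every box b = (i,j) in the Rothe diagram D(w) of w ∈ S_n, with r = r_{i,j}(w), the minor m_{[i-r,i],[j-r,j]} (with consecutive row interval [i-r,i] and column interval [j-r,j]) is an elusive minor whose southeast corner is b. -/

import Mathlib

/-- Rank function of a permutation: `rk w i j = #{a : 1 ≤ a ≤ i, w a ≤ j}`. -/
def rk (w : Equiv.Perm ℕ) (i j : ℕ) : ℕ :=
  ((Finset.Icc 1 i).filter (fun a => w a ≤ j)).card

/-- `(i,j)` is in the Rothe diagram `D(w)`. -/
def inRothe (w : Equiv.Perm ℕ) (i j : ℕ) : Prop :=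
  j < w i ∧ i < w.symm j

instance (w : Equiv.Perm ℕ) (i j : ℕ) : Decidable (inRothe w i j) := by
  unfold inRothe; infer_instance

/-- `(i,j)` is in Fulton's essential set `E(w)`. -/
def inEss (w : Equiv.Perm ℕ) (i j : ℕ) : Prop :=
  inRothe w i j ∧ ¬ inRothe w (i+1) j ∧ ¬ inRothe w i (j+1)

/-- The minor with row set `I` and column set `J` belongs to `(i,j) ∈ E(w)`. -/
def belongsTo (w : Equiv.Perm ℕ) (I J : Finset ℕ) (i j : ℕ) : Prop :=
  inEss w i j ∧ I ⊆ Finset.Icc 1 i ∧ J ⊆ Finset.Icc 1 j ∧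
    I.card = rk w i j + 1 ∧ J.card = rk w i j + 1

/-- The minor `m_{I,J}` attends `M^{[i',j']}`. -/
def attends (w : Equiv.Perm ℕ) (I J : Finset ℕ) (i' j' : ℕ) : Prop :=
  (rk w i' j' < (I ∩ Finset.Icc 1 i').card ∧ (J ∩ Finset.Icc 1 j').card = J.card) ∨
  ((I ∩ Finset.Icc 1 i').card = I.card ∧ rk w i' j' < (J ∩ Finset.Icc 1 j').card)

/-- The minor `m_{I,J}` belonging to `(i,j) ∈ E(w)` is elusive. -/
def elusive (w : Equiv.Perm ℕ) (I J : Finset ℕ) (i j : ℕ) : Prop :=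
  belongsTo w I J i j ∧
    ∀ i' j', inEss w i' j' → rk w i' j' < rk w i j → ¬ attends w I J i' j'

-- monotonicity
lemma rk_mono (w : Equiv.Perm ℕ) {i j i' j' : ℕ} (hi : i ≤ i') (hj : j ≤ j') :
    rk w i j ≤ rk w i' j' := by
  apply Finset.card_le_card
  intro a ha
  simp only [Finset.mem_filter, Finset.mem_Icc] at *
  exact ⟨⟨ha.1.1, ha.1.2.trans hi⟩, ha.2.trans hj⟩

lemma rk_lt_row (w : Equiv.Perm ℕ) {i j : ℕ} (h : j < w i) (hi : 1 ≤ i) : rk w i j < i := by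
  have hsub : (Finset.Icc 1 i).filter (fun a => w a ≤ j) ⊆ Finset.Icc 1 (i-1) := by
    intro a ha
    simp only [Finset.mem_filter, Finset.mem_Icc] at *
    have : a ≠ i := by
      intro e; subst e; omega
    omega
  have := Finset.card_le_card hsub
  rw [Nat.card_Icc] at this
  unfold rk
  omega

lemma rk_lt_col (w : Equiv.Perm ℕ) {i j : ℕ} (h : i < w.symm j) (h0 : w.symm 0 = 0)
    (hj : 1 ≤ j) : rk w i j < j := by
  have hle : ((Finset.Icc 1 i).filter (fun a => w a ≤ j)).card ≤ (Finset.Icc 1 (j-1)).card := by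
    apply Finset.card_le_card_of_injOn w
    · intro a ha
      simp only [Finset.mem_coe, Finset.mem_filter, Finset.mem_Icc] at *
      have hne : w a ≠ j := by
        intro e
        have : a = w.symm j := by rw [← e, Equiv.symm_apply_apply]
        omega
      have hne0 : w a ≠ 0 := by
        intro e
        have : a = w.symm 0 := by rw [← e, Equiv.symm_apply_apply]
        omega
      omega
    · exact w.injective.injOn
  rw [Nat.card_Icc] at hle
  unfold rk
  omega

lemma rk_row_gap (w : Equiv.Perm ℕ) {i' i j : ℕ} (hii : i' < i) (h : j < w i) :
    rk w i j ≤ rk w i' j + (i - i' - 1) := by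
  unfold rk
  have hsub : (Finset.Icc 1 i).filter (fun a => w a ≤ j) ⊆
      ((Finset.Icc 1 i').filter (fun a => w a ≤ j)) ∪ Finset.Icc (i'+1) (i-1) := by
    intro a ha
    simp only [Finset.mem_filter, Finset.mem_Icc, Finset.mem_union] at *
    by_cases hc : a ≤ i'
    · left; exact ⟨⟨ha.1.1, hc⟩, ha.2⟩
    · right
      have : a ≠ i := by intro e; subst e; omega
      omega
  have h1 := Finset.card_le_card hsub
  have h2 := Finset.card_union_le ((Finset.Icc 1 i').filter (fun a => w a ≤ j))
    (Finset.Icc (i'+1) (i-1))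
  rw [Nat.card_Icc] at h2
  omega

lemma rk_col_gap (w : Equiv.Perm ℕ) {i j j' : ℕ} (hjj : j' < j) (h : i < w.symm j) :
    rk w i j ≤ rk w i j' + (j - j' - 1) := by
  unfold rk
  have hsub : (Finset.Icc 1 i).filter (fun a => w a ≤ j) ⊆
      ((Finset.Icc 1 i).filter (fun a => w a ≤ j')) ∪
        ((Finset.Icc 1 i).filter (fun a => j' < w a ∧ w a ≤ j)) := by
    intro a ha
    simp only [Finset.mem_filter, Finset.mem_Icc, Finset.mem_union] at *
    by_cases hc : w a ≤ j'
    · left; exact ⟨ha.1, hc⟩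
    · right; exact ⟨ha.1, by omega, ha.2⟩
  have h1 := Finset.card_le_card hsub
  have h2 := Finset.card_union_le ((Finset.Icc 1 i).filter (fun a => w a ≤ j'))
    ((Finset.Icc 1 i).filter (fun a => j' < w a ∧ w a ≤ j))
  have h3 : ((Finset.Icc 1 i).filter (fun a => j' < w a ∧ w a ≤ j)).card ≤
      (Finset.Icc (j'+1) (j-1)).card := by
    apply Finset.card_le_card_of_injOn w
    · intro a ha
      simp only [Finset.mem_coe, Finset.mem_filter, Finset.mem_Icc] at *
      have hne : w a ≠ j := by
        intro e
        have : a = w.symm j := by rw [← e, Equiv.symm_apply_apply]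
        omega
      omega
    · exact w.injective.injOn
  rw [Nat.card_Icc] at h3
  omega

lemma rk_step_row (w : Equiv.Perm ℕ) {i j : ℕ} (h : inRothe w (i+1) j) :
    rk w (i+1) j = rk w i j := by
  unfold rk
  congr 1
  apply Finset.ext
  intro a
  simp only [Finset.mem_filter, Finset.mem_Icc]
  constructor
  · rintro ⟨⟨h1, h2⟩, h3⟩
    have hne : a ≠ i+1 := by
      intro e; subst e; exact absurd h3 (not_le.mpr h.1)
    exact ⟨⟨h1, by omega⟩, h3⟩
  · rintro ⟨⟨h1, h2⟩, h3⟩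
    exact ⟨⟨h1, by omega⟩, h3⟩

lemma rk_step_col (w : Equiv.Perm ℕ) {i j : ℕ} (h : inRothe w i (j+1)) :
    rk w i (j+1) = rk w i j := by
  unfold rk
  congr 1
  apply Finset.ext
  intro a
  simp only [Finset.mem_filter, Finset.mem_Icc]
  constructor
  · rintro ⟨⟨h1, h2⟩, h3⟩
    have hne : w a ≠ j+1 := by
      intro e
      have : a = w.symm (j+1) := by rw [← e, Equiv.symm_apply_apply]
      have := h.2
      omega
    exact ⟨⟨h1, h2⟩, by omega⟩
  · rintro ⟨⟨h1, h2⟩, h3⟩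
    exact ⟨⟨h1, h2⟩, by omega⟩

lemma rothe_bound (n : ℕ) (w : Equiv.Perm ℕ)
    (hw : ∀ a, a ∉ Finset.Icc 1 n → w a = a) {i j : ℕ} (h : inRothe w i j) :
    1 ≤ i ∧ i ≤ n ∧ 1 ≤ j ∧ j ≤ n := by
  obtain ⟨h1, h2⟩ := h
  have w0 : w 0 = 0 := hw 0 (by simp)
  have ws0 : w.symm 0 = 0 := by
    rw [Equiv.symm_apply_eq]; exact w0.symm
  have hi1 : 1 ≤ i := by
    by_contra hc
    have : i = 0 := by omega
    subst this
    rw [w0] at h1; omega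
  have hj1 : 1 ≤ j := by
    by_contra hc
    have : j = 0 := by omega
    subst this
    rw [ws0] at h2; omega
  have hin : i ≤ n := by
    by_contra hc
    have hwi : w i = i := hw i (by simp [Finset.mem_Icc]; omega)
    rw [hwi] at h1
    -- j < i, i < w.symm j
    set a := w.symm j with ha
    have hwa : w a = j := Equiv.apply_symm_apply w j
    by_cases hmem : a ∈ Finset.Icc 1 n
    · simp [Finset.mem_Icc] at hmem; omega
    · have := hw a hmem
      rw [this] at hwa
      omega
  have hjn : j ≤ n := by
    by_contra hc
    have hwj : w j = j := hw j (by simp [Finset.mem_Icc]; omega)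
    have hsj : w.symm j = j := by rw [Equiv.symm_apply_eq]; exact hwj.symm
    rw [hsj] at h2
    -- i < j, j < w i
    by_cases hmem : i ∈ Finset.Icc 1 n
    · -- w i ∈ Icc 1 n
      by_cases hmem2 : w i ∈ Finset.Icc 1 n
      · simp [Finset.mem_Icc] at hmem2; omega
      · have := hw (w i) hmem2
        have := w.injective this
        simp [Finset.mem_Icc] at hmem
        omega
    · have := hw i hmem
      omega
  exact ⟨hi1, hin, hj1, hjn⟩

lemma walk (n : ℕ) (w : Equiv.Perm ℕ)
    (hw : ∀ a, a ∉ Finset.Icc 1 n → w a = a) :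
    ∀ m i j, 2*n ≤ m + i + j → inRothe w i j →
      ∃ a b, inEss w a b ∧ i ≤ a ∧ j ≤ b ∧ rk w a b = rk w i j := by
  intro m
  induction m with
  | zero =>
    intro i j hm h
    have hb := rothe_bound n w hw h
    refine ⟨i, j, ⟨h, ?_, ?_⟩, le_refl _, le_refl _, rfl⟩
    · intro hR
      have := rothe_bound n w hw hR
      omega
    · intro hR
      have := rothe_bound n w hw hR
      omega
  | succ m ih =>
    intro i j hm h
    by_cases h1 : inRothe w (i+1) j
    · obtain ⟨a, b, he, ha, hb, hrk⟩ := ih (i+1) j (by omega) h1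
      exact ⟨a, b, he, by omega, hb, by rw [hrk, rk_step_row w h1]⟩
    · by_cases h2 : inRothe w i (j+1)
      · obtain ⟨a, b, he, ha, hb, hrk⟩ := ih i (j+1) (by omega) h2
        exact ⟨a, b, he, ha, by omega, by rw [hrk, rk_step_col w h2]⟩
      · exact ⟨i, j, ⟨h, h1, h2⟩, le_refl _, le_refl _, rfl⟩

/-- Proposition 2.2: for b = (i,j) ∈ D(w) with r = r_{i,j}(w),
the minor with consecutive rows [i-r,i] and columns [j-r,j] is elusive
(belonging to some essential box), and its southeast corner is b. -/
theorem consecutive_minor_elusive (n : ℕ) (w : Equiv.Perm ℕ)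
    (hw : ∀ a, a ∉ Finset.Icc 1 n → w a = a)
    (i j r : ℕ) (hb : inRothe w i j) (hr : r = rk w i j) :
    (∃ a b : ℕ, elusive w (Finset.Icc (i-r) i) (Finset.Icc (j-r) j) a b) ∧
    (Finset.Icc (i-r) i).max = (i : WithBot ℕ) ∧
    (Finset.Icc (j-r) j).max = (j : WithBot ℕ) := by
  obtain ⟨hi1, hin, hj1, hjn⟩ := rothe_bound n w hw hb
  have w0 : w 0 = 0 := hw 0 (by simp)
  have ws0 : w.symm 0 = 0 := by rw [Equiv.symm_apply_eq]; exact w0.symm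
  have hri : r < i := hr ▸ rk_lt_row w hb.1 hi1
  have hrj : r < j := hr ▸ rk_lt_col w hb.2 ws0 hj1
  obtain ⟨a, b, hess, hia, hjb, hrab⟩ := walk n w hw (2*n) i j (by omega) hb
  have hrab' : rk w a b = r := by rw [hrab, ← hr]
  have hImem : i ∈ Finset.Icc (i-r) i := Finset.mem_Icc.mpr ⟨by omega, le_refl _⟩
  have hJmem : j ∈ Finset.Icc (j-r) j := Finset.mem_Icc.mpr ⟨by omega, le_refl _⟩
  refine ⟨⟨a, b, ⟨hess, ?_, ?_, ?_, ?_⟩, ?_⟩, ?_, ?_⟩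
  · intro x hx
    simp only [Finset.mem_Icc] at *
    omega
  · intro x hx
    simp only [Finset.mem_Icc] at *
    omega
  · rw [Nat.card_Icc, hrab']; omega
  · rw [Nat.card_Icc, hrab']; omega
  · -- elusiveness
    intro i' j' hess' hlt hatt
    rw [hrab'] at hlt
    rcases hatt with ⟨h1, h2⟩ | ⟨h1, h2⟩
    · -- row-attending case
      have hJsub : Finset.Icc (j-r) j ⊆ Finset.Icc 1 j' := by
        have he := Finset.eq_of_subset_of_card_le
          (Finset.inter_subset_left)
          (le_of_eq h2.symm)
        intro x hx
        rw [← he] at hx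
        exact (Finset.mem_inter.mp hx).2
      have hjj' : j ≤ j' := (Finset.mem_Icc.mp (hJsub hJmem)).2
      rcases le_or_gt i i' with hi' | hi'
      · have := rk_mono w hi' hjj'
        omega
      · have hcsub : Finset.Icc (i-r) i ∩ Finset.Icc 1 i' ⊆ Finset.Icc (i-r) i' := by
          intro x hx
          simp only [Finset.mem_inter, Finset.mem_Icc] at *
          omega
        have hcard := Finset.card_le_card hcsub
        rw [Nat.card_Icc] at hcard
        have hgap := rk_row_gap w hi' hb.1
        have hmono := rk_mono w (le_refl i') hjj'
        omega
    · -- column-attending case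
      have hIsub : Finset.Icc (i-r) i ⊆ Finset.Icc 1 i' := by
        have he := Finset.eq_of_subset_of_card_le
          (Finset.inter_subset_left)
          (le_of_eq h1.symm)
        intro x hx
        rw [← he] at hx
        exact (Finset.mem_inter.mp hx).2
      have hii' : i ≤ i' := (Finset.mem_Icc.mp (hIsub hImem)).2
      rcases le_or_gt j j' with hj' | hj'
      · have := rk_mono w hii' hj'
        omega
      · have hcsub : Finset.Icc (j-r) j ∩ Finset.Icc 1 j' ⊆ Finset.Icc (j-r) j' := by
          intro x hx
          simp only [Finset.mem_inter, Finset.mem_Icc] at *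
          omega
        have hcard := Finset.card_le_card hcsub
        rw [Nat.card_Icc] at hcard
        have hgap := rk_col_gap w hj' hb.2
        have hmono := rk_mono w hii' (le_refl j')
        omega
  · apply le_antisymm
    · apply Finset.max_le
      intro x hx
      simp only [Finset.mem_Icc] at hx
      exact WithBot.coe_le_coe.mpr hx.2
    · exact Finset.le_max hImem
  · apply le_antisymm
    · apply Finset.max_le
      intro x hx
      simp only [Finset.mem_Icc] at hx
      exact WithBot.coe_le_coe.mpr hx.2
    · exact Finset.le_max hJmem
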